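/- (Minty's theorem) Let A be a monotone operator with nonempty domain on a real Hilbert space H. Then A is maximal monotone if and only if for every λ > 0 the operator I + λA is surjective, i.e., for every z ∈ H there exists (x, x*) ∈ A with x + λx* = z. -/

import Mathlib

open RealInnerProductSpace

/-- An operator (identified with its graph) is monotone. -/
def MonotoneOp {H : Type*} [NormedAddCommGroup H] [InnerProductSpace ℝ H]
    (A : Set (H × H)) : Prop :=
  ∀ p ∈ A, ∀ q ∈ A, (0:ℝ) ≤ ⟪p.2 - q.2, p.1 - q.1⟫

section MintyHelpers

variable {H : Type*} [NormedAddCommGroup H] [InnerProductSpace ℝ H]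

private lemma quad_combo (t : ℝ) (x y : H) :
    ⟪(1-t)•x + t•y, (1-t)•x + t•y⟫ = (1-t)*⟪x,x⟫ + t*⟪y,y⟫ - t*(1-t)*⟪x-y,x-y⟫ := by
  simp only [inner_add_left, inner_add_right, inner_sub_left, inner_sub_right,
    real_inner_smul_left, real_inner_smul_right]
  rw [real_inner_comm y x]; ring

private lemma lin_combo (t : ℝ) (x y c : H) :
    ⟪(1-t)•x + t•y, c⟫ = (1-t)*⟪x,c⟫ + t*⟪y,c⟫ := by
  simp only [inner_add_left, real_inner_smul_left]

private lemma lin_combo' (t : ℝ) (x y c : H) :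
    ⟪c, (1-t)•x + t•y⟫ = (1-t)*⟪c,x⟫ + t*⟪c,y⟫ := by
  simp only [inner_add_right, real_inner_smul_right]

private lemma extend_point {A : Set (H × H)} (hmono : MonotoneOp A)
    (hmax : ∀ B : Set (H × H), MonotoneOp B → A ⊆ B → B = A)
    (x u : H) (h : ∀ p ∈ A, (0:ℝ) ≤ ⟪u - p.2, x - p.1⟫) : (x, u) ∈ A := by
  have hB : MonotoneOp (insert (x,u) A) := by
    rintro p (rfl | hp) q (rfl | hq)
    · simp
    · exact h q hq
    · have := h p hp; rwa [← inner_neg_neg, neg_sub, neg_sub] at this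
    · exact hmono p hp q hq
  have hEq := hmax _ hB (Set.subset_insert _ _)
  rw [← hEq]; exact Set.mem_insert _ _

private lemma exists_nonpos {A : Set (H × H)} (hmono : MonotoneOp A)
    (hmax : ∀ B : Set (H × H), MonotoneOp B → A ⊆ B → B = A)
    (x u : H) : ∃ p ∈ A, ⟪u - p.2, x - p.1⟫ ≤ (0:ℝ) := by
  by_contra hc
  push_neg at hc
  have hxu : (x,u) ∈ A := extend_point hmono hmax x u (fun p hp => (hc p hp).le)
  have := hc (x,u) hxu
  simp at this

private lemma cauchy_of_inner {x : ℕ → H}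
    (h : ∀ n k : ℕ, ⟪x n - x k, x n - x k⟫ ≤ 8/(n+1) + 8/(k+1)) : CauchySeq x := by
  rw [Metric.cauchySeq_iff']
  intro ε hε
  obtain ⟨N, hN⟩ := exists_nat_gt (32 / (ε^2))
  refine ⟨N, fun n hn => ?_⟩
  have hb : ⟪x n - x N, x n - x N⟫ ≤ 8/(n+1) + 8/(N+1) := h n N
  have h1 : (8:ℝ)/(n+1) ≤ 8/(N+1) := by
    apply div_le_div_of_nonneg_left (by norm_num) (by positivity)
    exact_mod_cast by exact_mod_cast add_le_add_left (Nat.cast_le.2 hn) 1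
  have h2 : (8:ℝ)/(N+1) < ε^2/4 := by
    rw [div_lt_div_iff₀ (by positivity) (by norm_num)]
    have : (32:ℝ)/(ε^2) < N := hN
    rw [div_lt_iff₀ (by positivity)] at this
    nlinarith [sq_nonneg ε]
  have hd : dist (x n) (x N) ^ 2 < ε ^ 2 := by
    rw [dist_eq_norm, ← real_inner_self_eq_norm_sq]
    nlinarith
  exact lt_of_pow_lt_pow_left₀ 2 hε.le hd

private lemma core [CompleteSpace H] (A : Set (H × H)) (hA : A.Nonempty) (hmono : MonotoneOp A)
    (hmax : ∀ B : Set (H × H), MonotoneOp B → A ⊆ B → B = A) :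
    ∃ p ∈ A, p.1 + p.2 = 0 := by
  classical
  -- the (translated) Fitzpatrick-type integrand
  set g : H × H → H → H → ℝ := fun p x u =>
    ⟪x, p.2⟫ + ⟪p.1, u⟫ - ⟪p.1, p.2⟫ + ⟪x, x⟫/2 + ⟪u, u⟫/2 with hg
  set S : H → H → Set ℝ := fun x u => (fun p => g p x u) '' A with hS
  set ψ : H → H → ℝ := fun x u => sSup (S x u) with hψ
  have hSne : ∀ x u, (S x u).Nonempty := fun x u => (hA.image _)
  have hmemS : ∀ x u, ∀ p ∈ A, g p x u ∈ S x u := fun x u p hp => ⟨p, hp, rfl⟩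
  -- value and boundedness at points of A
  have hvalA : ∀ p ∈ A, ∀ q ∈ A, g q p.1 p.2 ≤ g p p.1 p.2 := by
    intro p hp q hq
    have hm := hmono p hp q hq
    simp only [hg, inner_sub_left, inner_sub_right] at *
    have c1 := real_inner_comm p.1 q.2
    have c2 := real_inner_comm p.2 q.1
    have c3 := real_inner_comm p.2 p.1
    have c4 := real_inner_comm q.2 q.1
    linarith
  have hbddA : ∀ p ∈ A, BddAbove (S p.1 p.2) := by
    intro p hp
    exact ⟨g p p.1 p.2, by rintro r ⟨q, hq, rfl⟩; exact hvalA p hp q hq⟩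
  have hψA : ∀ p ∈ A, ψ p.1 p.2 = g p p.1 p.2 := by
    intro p hp
    refine le_antisymm (csSup_le (hSne _ _) ?_) (le_csSup (hbddA p hp) (hmemS _ _ p hp))
    rintro r ⟨q, hq, rfl⟩; exact hvalA p hp q hq
  -- lower bound via maximality
  have hlow : ∀ x u, BddAbove (S x u) → ⟪x + u, x + u⟫/2 ≤ ψ x u := by
    intro x u hbdd
    obtain ⟨p, hp, hple⟩ := exists_nonpos hmono hmax x u
    refine le_trans ?_ (le_csSup hbdd (hmemS x u p hp))
    simp only [hg, inner_sub_left, inner_sub_right, inner_add_left, inner_add_right] at *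
    have c1 := real_inner_comm x p.2
    have c2 := real_inner_comm u p.1
    have c3 := real_inner_comm p.1 p.2
    have c4 := real_inner_comm x u
    linarith
  -- the infimum
  set T : Set ℝ := {r | ∃ x u, BddAbove (S x u) ∧ ψ x u = r} with hT
  have hTne : T.Nonempty := by
    obtain ⟨p, hp⟩ := hA
    exact ⟨ψ p.1 p.2, p.1, p.2, hbddA p hp, rfl⟩
  have hTbd : BddBelow T := by
    refine ⟨0, ?_⟩
    rintro r ⟨x, u, hbdd, rfl⟩
    exact le_trans (div_nonneg real_inner_self_nonneg (by norm_num)) (hlow x u hbdd)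
  set m : ℝ := sInf T with hm
  have hmle : ∀ x u, BddAbove (S x u) → m ≤ ψ x u := fun x u hbdd =>
    csInf_le hTbd ⟨x, u, hbdd, rfl⟩
  -- minimizing sequence
  have hseq : ∀ n : ℕ, ∃ x u, BddAbove (S x u) ∧ ψ x u < m + 1/(n+1) := by
    intro n
    obtain ⟨r, hr, hlt⟩ := Real.lt_sInf_add_pos hTne (show (0:ℝ) < 1/(n+1) by positivity)
    obtain ⟨x, u, hbdd, rfl⟩ := hr
    exact ⟨x, u, hbdd, hlt⟩
  choose xs us hbdds hlts using hseq
  -- convexity combo inequality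
  have hcombo : ∀ (t : ℝ), 0 ≤ t → t ≤ 1 → ∀ x u x' u', BddAbove (S x u) → BddAbove (S x' u') →
      BddAbove (S ((1-t)•x + t•x') ((1-t)•u + t•u')) ∧
      ψ ((1-t)•x + t•x') ((1-t)•u + t•u') ≤ (1-t) * ψ x u + t * ψ x' u'
        - t*(1-t)/2 * (⟪x - x', x - x'⟫ + ⟪u - u', u - u'⟫) := by
    intro t ht0 ht1 x u x' u' hb hb'
    have key : ∀ p ∈ A, g p ((1-t)•x + t•x') ((1-t)•u + t•u')
        = (1-t) * g p x u + t * g p x' u' - t*(1-t)/2 * (⟪x - x', x - x'⟫ + ⟪u - u', u - u'⟫) := by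
      intro p hp
      simp only [hg, lin_combo, lin_combo', quad_combo, inner_sub_left, inner_sub_right]
      rw [real_inner_comm x' x, real_inner_comm u' u]
      ring
    have hub : ∀ r ∈ S ((1-t)•x + t•x') ((1-t)•u + t•u'),
        r ≤ (1-t) * ψ x u + t * ψ x' u' - t*(1-t)/2 * (⟪x - x', x - x'⟫ + ⟪u - u', u - u'⟫) := by
      rintro r ⟨p, hp, rfl⟩
      dsimp only
      rw [key p hp]
      have g1 : g p x u ≤ ψ x u := le_csSup hb (hmemS _ _ p hp)
      have g2 : g p x' u' ≤ ψ x' u' := le_csSup hb' (hmemS _ _ p hp)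
      have m1 := mul_le_mul_of_nonneg_left g1 (by linarith : (0:ℝ) ≤ 1 - t)
      have m2 := mul_le_mul_of_nonneg_left g2 ht0
      exact sub_le_sub (add_le_add m1 m2) le_rfl
    exact ⟨⟨_, hub⟩, csSup_le (hSne _ _) hub⟩
  -- Cauchy estimates
  have hQ : ∀ n k : ℕ, ⟪xs n - xs k, xs n - xs k⟫ + ⟪us n - us k, us n - us k⟫
      ≤ 8/(n+1) + 8/(k+1) := by
    intro n k
    obtain ⟨hbmid, hmid⟩ := hcombo (1/2) (by norm_num) (by norm_num)
      (xs n) (us n) (xs k) (us k) (hbdds n) (hbdds k)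
    have h1 := hmle _ _ hbmid
    have h2 := (hlts n).le
    have h3 := (hlts k).le
    have e1 : (0:ℝ) ≤ ⟪xs n - xs k, xs n - xs k⟫ := real_inner_self_nonneg
    have e2 : (0:ℝ) ≤ ⟪us n - us k, us n - us k⟫ := real_inner_self_nonneg
    have e3 : (0:ℝ) ≤ 1/((n:ℝ)+1) := by positivity
    have e4 : (0:ℝ) ≤ 1/((k:ℝ)+1) := by positivity
    have e5 : (8:ℝ)/((n:ℝ)+1) = 8 * (1/((n:ℝ)+1)) := by ring
    have e6 : (8:ℝ)/((k:ℝ)+1) = 8 * (1/((k:ℝ)+1)) := by ring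
    rw [e5, e6]
    linarith [h1.trans hmid]
  have hcx : CauchySeq xs := cauchy_of_inner (fun n k => by nlinarith [hQ n k, real_inner_self_nonneg (x := us n - us k)])
  have hcu : CauchySeq us := cauchy_of_inner (fun n k => by nlinarith [hQ n k, real_inner_self_nonneg (x := xs n - xs k)])
  obtain ⟨xb, hxb⟩ := cauchySeq_tendsto_of_complete hcx
  obtain ⟨ub, hub⟩ := cauchySeq_tendsto_of_complete hcu
  -- limit bound : g p xb ub ≤ m for all p ∈ A
  have hgbar : ∀ p ∈ A, g p xb ub ≤ m := by
    intro p hp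
    have htd : Filter.Tendsto (fun n => g p (xs n) (us n)) Filter.atTop (nhds (g p xb ub)) := by
      simp only [hg]
      exact ((((hxb.inner (tendsto_const_nhds)).add
        ((tendsto_const_nhds).inner hub)).sub tendsto_const_nhds).add
        ((hxb.inner hxb).div_const 2)).add ((hub.inner hub).div_const 2)
    have htd2 : Filter.Tendsto (fun n : ℕ => m + 1/((n:ℝ)+1)) Filter.atTop (nhds (m + 0)) :=
      tendsto_const_nhds.add tendsto_one_div_add_atTop_nhds_zero_nat
    rw [add_zero] at htd2
    refine le_of_tendsto_of_tendsto' htd htd2 (fun n => ?_)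
    exact le_trans (le_csSup (hbdds n) (hmemS _ _ p hp)) (hlts n).le
  have hbddbar : BddAbove (S xb ub) := ⟨m, by rintro r ⟨p, hp, rfl⟩; exact hgbar p hp⟩
  have hψbar : ψ xb ub ≤ m := csSup_le (hSne _ _) (by rintro r ⟨p, hp, rfl⟩; exact hgbar p hp)
  have hψbar' : ψ xb ub = m := le_antisymm hψbar (hmle _ _ hbddbar)
  -- minimizer inequality (star')
  have hstar : ∀ p ∈ A, m + (⟪p.1 - xb, p.1 - xb⟫ + ⟪p.2 - ub, p.2 - ub⟫)/2 ≤ g p p.1 p.2 := by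
    intro p hp
    have hQ0 : (0:ℝ) ≤ ⟪xb - p.1, xb - p.1⟫ + ⟪ub - p.2, ub - p.2⟫ := by
      have h1 := real_inner_self_nonneg (x := xb - p.1)
      have h2 := real_inner_self_nonneg (x := ub - p.2)
      linarith
    have step : ∀ t : ℝ, 0 < t → t < 1 →
        m ≤ g p p.1 p.2 - (1-t)/2 * (⟪xb - p.1, xb - p.1⟫ + ⟪ub - p.2, ub - p.2⟫) := by
      intro t ht0 ht1
      obtain ⟨hbmid, hmid⟩ := hcombo t ht0.le ht1.le xb ub p.1 p.2 hbddbar (hbddA p hp)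
      have h1 := hmle _ _ hbmid
      rw [hψbar', hψA p hp] at hmid
      have := h1.trans hmid
      nlinarith
    have : ∀ ε : ℝ, 0 < ε →
        m + (⟪xb - p.1, xb - p.1⟫ + ⟪ub - p.2, ub - p.2⟫)/2 ≤ g p p.1 p.2 + ε := by
      intro ε hε
      set Q := ⟪xb - p.1, xb - p.1⟫ + ⟪ub - p.2, ub - p.2⟫ with hQdef
      rcases le_or_gt Q 0 with hq | hq
      · have := step (1/2) (by norm_num) (by norm_num); nlinarith
      · set t := min (1/2) (2*ε/Q) with htdef
        have ht0 : 0 < t := lt_min (by norm_num) (by positivity)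
        have ht1 : t < 1 := lt_of_le_of_lt (min_le_left _ _) (by norm_num)
        have := step t ht0 ht1
        have htQ : t * Q ≤ 2*ε := by
          calc t * Q ≤ (2*ε/Q) * Q := by
                exact mul_le_mul_of_nonneg_right (min_le_right _ _) hq.le
            _ = 2*ε := by field_simp
        nlinarith
    have h2 := le_of_forall_pos_le_add this
    have c1 : ⟪p.1 - xb, p.1 - xb⟫ = ⟪xb - p.1, xb - p.1⟫ := by
      rw [← inner_neg_neg]; simp [neg_sub]
    have c2 : ⟪p.2 - ub, p.2 - ub⟫ = ⟪ub - p.2, ub - p.2⟫ := by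
      rw [← inner_neg_neg]; simp [neg_sub]
    rw [c1, c2]; exact h2
  -- conclude
  obtain ⟨p0, hp0, hp0le⟩ := exists_nonpos hmono hmax (-ub) (-xb)
  have hlow' : ⟪xb + ub, xb + ub⟫/2 ≤ m := by
    have := hlow xb ub hbddbar
    rwa [hψbar'] at this
  have hexp : ⟪xb + ub, xb + ub⟫ = ⟪xb,xb⟫ + 2*⟪xb,ub⟫ + ⟪ub,ub⟫ := by
    simp only [inner_add_left, inner_add_right]
    rw [real_inner_comm ub xb]; ring
  have hkey : m + ⟪xb + ub, xb + ub⟫/2 ≤ 0 := by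
    rw [hexp]
    have e1 := hstar p0 hp0
    simp only [hg, inner_sub_left, inner_sub_right, inner_add_left, inner_add_right,
      inner_neg_left, inner_neg_right] at e1 hp0le
    have c1 := real_inner_comm xb p0.1
    have c2 := real_inner_comm ub p0.2
    have c3 := real_inner_comm xb p0.2
    have c4 := real_inner_comm ub p0.1
    have c5 := real_inner_comm p0.1 p0.2
    have c6 := real_inner_comm xb ub
    have c7 := real_inner_comm p0.2 p0.1
    linarith
  have h0 : (0:ℝ) ≤ ⟪xb + ub, xb + ub⟫ := real_inner_self_nonneg
  have hm0 : m ≤ 0 := by linarith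
  have hzero : ⟪xb + ub, xb + ub⟫ = (0:ℝ) := le_antisymm (by linarith) h0
  have hxbub : xb + ub = 0 := by
    have := inner_self_eq_zero (𝕜 := ℝ) (x := xb + ub)
    exact this.mp hzero
  refine ⟨(xb, ub), ?_, hxbub⟩
  apply extend_point hmono hmax
  intro q hq
  have e1 := hgbar q hq
  have e2 := e1.trans hm0
  simp only [hg, inner_sub_left, inner_sub_right, inner_add_left, inner_add_right] at e2 hzero ⊢
  have c1 := real_inner_comm q.2 xb
  have c2 := real_inner_comm ub q.1
  have c3 := real_inner_comm q.2 q.1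
  have c4 := real_inner_comm xb ub
  linarith


private lemma scaled {A : Set (H × H)} [CompleteSpace H] (hA : A.Nonempty)
    (hmono : MonotoneOp A)
    (hmax : ∀ B : Set (H × H), MonotoneOp B → A ⊆ B → B = A)
    {lam : ℝ} (hlam : 0 < lam) (z : H) : ∃ p ∈ A, p.1 + lam • p.2 = z := by
  set A' : Set (H × H) := (fun p : H × H => (p.1 - z, lam • p.2)) '' A with hA'def
  have hA'ne : A'.Nonempty := hA.image _
  have hmono' : MonotoneOp A' := by
    rintro _ ⟨p, hp, rfl⟩ _ ⟨q, hq, rfl⟩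
    simp only
    rw [sub_sub_sub_cancel_right, ← smul_sub, real_inner_smul_left]
    exact mul_nonneg hlam.le (hmono p hp q hq)
  have hmax' : ∀ B' : Set (H × H), MonotoneOp B' → A' ⊆ B' → B' = A' := by
    intro B' hB' hsub
    set B : Set (H × H) := {p : H × H | (p.1 - z, lam • p.2) ∈ B'} with hBdef
    have hBmono : MonotoneOp B := by
      intro p hp q hq
      have h := hB' _ hp _ hq
      simp only at h
      rw [sub_sub_sub_cancel_right, ← smul_sub, real_inner_smul_left] at h
      nlinarith
    have hAB : A ⊆ B := fun p hp => hsub ⟨p, hp, rfl⟩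
    have hBA : B = A := hmax B hBmono hAB
    apply Set.Subset.antisymm _ hsub
    intro q hq
    have hmem : (q.1 + z, lam⁻¹ • q.2) ∈ B := by
      simp only [hBdef, Set.mem_setOf_eq, add_sub_cancel_right, smul_smul,
        mul_inv_cancel₀ hlam.ne', one_smul]
      exact hq
    rw [hBA] at hmem
    refine ⟨(q.1 + z, lam⁻¹ • q.2), hmem, ?_⟩
    simp only [add_sub_cancel_right, smul_smul, mul_inv_cancel₀ hlam.ne', one_smul]
  obtain ⟨q, hq, hq0⟩ := core A' hA'ne hmono' hmax'
  obtain ⟨p, hp, rfl⟩ := hq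
  refine ⟨p, hp, ?_⟩
  simp only at hq0
  have : p.1 - z + lam • p.2 + z = 0 + z := by rw [hq0]
  rwa [sub_add_eq_add_sub, sub_add_cancel, zero_add] at this

end MintyHelpers

/-- Minty's theorem: a monotone operator `A` with nonempty domain on a real
Hilbert space is maximal monotone iff `I + λA` is surjective for every `λ > 0`. -/
theorem stmt2 {H : Type*} [NormedAddCommGroup H] [InnerProductSpace ℝ H] [CompleteSpace H]
    (A : Set (H × H)) (hA : A.Nonempty) (hmono : MonotoneOp A) :
    (∀ B : Set (H × H), MonotoneOp B → A ⊆ B → B = A) ↔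
      (∀ lam : ℝ, 0 < lam → ∀ z : H, ∃ p ∈ A, p.1 + lam • p.2 = z) := by
  constructor
  · intro hmax lam hlam z
    exact scaled hA hmono hmax hlam z
  · intro hsurj B hB hsub
    apply Set.Subset.antisymm _ hsub
    intro q hq
    obtain ⟨p, hp, hpe⟩ := hsurj 1 one_pos (q.1 + q.2)
    rw [one_smul] at hpe
    have hm := hB q hq p (hsub hp)
    have h2 : q.2 - p.2 = -(q.1 - p.1) := by
      have : p.2 - q.2 = q.1 - p.1 := by
        rw [sub_eq_sub_iff_add_eq_add, add_comm p.2 p.1, hpe, add_comm]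
      rw [← neg_sub p.2 q.2, this]
    rw [h2, inner_neg_left] at hm
    have h3 : ⟪q.1 - p.1, q.1 - p.1⟫ = (0:ℝ) :=
      le_antisymm (by linarith) real_inner_self_nonneg
    have h4 : q.1 = p.1 := by
      have := (inner_self_eq_zero (𝕜 := ℝ)).mp h3
      rwa [sub_eq_zero] at this
    have h5 : q.2 = p.2 := by
      have := hpe
      rw [← h4] at this
      exact (add_left_cancel this).symm
    have : q = p := Prod.ext h4 h5
    rw [this]; exact hp
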